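/- Let C be a GQC code over Z4 with normalized triangular generators, let C⊥ have normalized generators e_i = (E_{i,1}|...|E_{i,i}|0|...|0), and for the truncated code (i)C let G_{r,r}^{(r−1)} be the diagonalized generator polynomial of the r-th block obtained by successive elimination (so that (0|...|0|G_{r,r}^{(r−1)}|0|...|0) ∈ (i)C). Then E_{t,r} · (G_{r,r}^{(r−1)})* ≡ 0 (mod x^{m_r} − 1) for all 1 ≤ r ≤ i and r ≤ t ≤ i. -/

import Mathlib

open Polynomial

/-- The simultaneous cyclic shift of each block. -/
def shiftAll {l : ℕ} (m : Fin l → ℕ) [∀ i, NeZero (m i)]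
    (c : ∀ i, Fin (m i) → ZMod 4) : ∀ i, Fin (m i) → ZMod 4 :=
  fun i j => c i (j - 1)

/-- The Euclidean inner product on `(ℤ/4)^{m₁} × ⋯ × (ℤ/4)^{m_l}`. -/
def innerP {l : ℕ} (m : Fin l → ℕ) (c d : ∀ i, Fin (m i) → ZMod 4) : ZMod 4 :=
  ∑ i, ∑ j, c i j * d i j

section AuxLemmas

/-- Evaluation of a polynomial at an `M`-th root of unity only depends on the residue
mod `X^M - 1`. -/
lemma aeval_root_of_pow_eq_one {S : Type*} [CommRing S] [Algebra (ZMod 4) S]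
    {M : ℕ} (hM : M ≠ 0) {s : S} (hs : s ^ M = 1) (p : (ZMod 4)[X]) :
    aeval s p = ∑ j ∈ Finset.range M,
      algebraMap (ZMod 4) S ((p %ₘ ((X : (ZMod 4)[X]) ^ M - 1)).coeff j) * s ^ j := by
  set q : (ZMod 4)[X] := X ^ M - 1 with hq
  have hqmon : q.Monic := by
    have := Polynomial.monic_X_pow_sub_C (1 : ZMod 4) hM
    simpa [hq] using this
  conv_lhs => rw [← Polynomial.modByMonic_add_div p q]
  have h0 : aeval s q = 0 := by simp [hq, hs]
  rw [map_add, map_mul, h0, zero_mul, add_zero]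
  haveI : Nontrivial (ZMod 4) := ⟨0, 1, by decide⟩
  have hdeg : (p %ₘ q).natDegree < M := by
    rcases eq_or_ne (p %ₘ q) 0 with h | h
    · simpa [h] using Nat.pos_of_ne_zero hM
    · have h1 : (p %ₘ q).degree < q.degree := Polynomial.degree_modByMonic_lt p hqmon
      have h2 : q.degree = (M : ℕ) := by
        rw [Polynomial.degree_eq_natDegree hqmon.ne_zero]
        norm_cast
        have hq' : q = X ^ M - C 1 := by rw [hq]; simp
        rw [hq', Polynomial.natDegree_X_pow_sub_C]
      rw [Polynomial.degree_eq_natDegree h, h2] at h1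
      exact_mod_cast h1
  rw [Polynomial.aeval_eq_sum_range' hdeg]
  exact Finset.sum_congr rfl fun j _ => by rw [Algebra.smul_def]

lemma pow_mod_of_pow_eq_one {S : Type*} [Monoid S] {M : ℕ} {s : S} (hs : s ^ M = 1)
    (n : ℕ) : s ^ n = s ^ (n % M) := by
  conv_lhs => rw [← Nat.mod_add_div n M]
  rw [pow_add, pow_mul, hs, one_pow, mul_one]

lemma key_exponent {M : ℕ} (hM : M ≠ 0) (j k : Fin M) :
    ((j : ℕ) + (k : ℕ) * (M - 1)) % M = ((j - k : Fin M) : ℕ) := by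
  have hk : (k : ℕ) ≤ M := k.isLt.le
  have h1 : ((j : ℕ) + (k : ℕ) * (M - 1)) % M = (M - (k : ℕ) + (j : ℕ)) % M := by
    have hmod : ((j : ℕ) + (k : ℕ) * (M - 1)) + (k : ℕ)
        ≡ (M - (k : ℕ) + (j : ℕ)) + (k : ℕ) [MOD M] := by
      obtain ⟨M', rfl⟩ : ∃ M', M = M' + 1 := ⟨M - 1, by omega⟩
      have e1 : ((j : ℕ) + (k : ℕ) * (M' + 1 - 1)) + (k : ℕ)
          = (j : ℕ) + (k : ℕ) * (M' + 1) := by simp only [Nat.add_sub_cancel]; ring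
      have e2 : (M' + 1 - (k : ℕ) + (j : ℕ)) + (k : ℕ) = (j : ℕ) + (M' + 1) := by omega
      rw [e1, e2]
      unfold Nat.ModEq
      rw [Nat.add_mul_mod_self_right, Nat.add_mod_right]
    exact Nat.ModEq.add_right_cancel' _ hmod
  rw [h1, Fin.sub_def]

end AuxLemmas

/-- The coefficient vector in `(ℤ/4)^{m_r}` of (the reduction mod `x^{m_r}-1` of) a
polynomial. -/

noncomputable def vecOf {l : ℕ} (m : Fin l → ℕ) (r : Fin l)
    (p : Polynomial (ZMod 4)) : Fin (m r) → ZMod 4 :=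
  fun j => (p %ₘ ((X : Polynomial (ZMod 4)) ^ (m r : ℕ) - 1)).coeff (j : ℕ)

/-- Lemma 5: if `C` is a GQC code over `ℤ/4`, `e_t = (E_{t,1}|…|E_{t,t}|0|…|0)` are the
normalized generators of `C^⊥`, and `G_{r,r}^{(r-1)}` (here `G r`) is the diagonalized
generator of the `r`-th block obtained by successive elimination, so that the vector
`(0|…|0|G_{r,r}^{(r-1)}|0|…|0)` lies in the truncated code `(i)C`, then
`E_{t,r} · (G_{r,r}^{(r-1)})* ≡ 0 (mod x^{m_r} - 1)` for all `r ≤ t ≤ i`. -/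
theorem dual_entries_orthogonal_to_diagonalized (l : ℕ) (m : Fin l → ℕ)
    [∀ i, NeZero (m i)] (hodd : ∀ i, Odd (m i))
    (Ccode : Submodule (ZMod 4) (∀ r, Fin (m r) → ZMod 4))
    (hC : ∀ c ∈ Ccode, shiftAll m c ∈ Ccode)
    (i : Fin l)
    (E : Fin l → Fin l → Polynomial (ZMod 4))
    (eVec : Fin l → ∀ r, Fin (m r) → ZMod 4)
    (heVec : ∀ t r, eVec t r = if r ≤ t then vecOf m r (E t r) else 0)
    (hdual : ∀ t : Fin l, ∀ c ∈ Ccode, innerP m (eVec t) c = 0)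
    (G : Fin l → Polynomial (ZMod 4)) (hGmon : ∀ r, (G r).Monic)
    (hG : ∀ r : Fin l, r ≤ i → ∃ c ∈ Ccode, c r = vecOf m r (G r) ∧
        ∀ s : Fin l, s ≤ i → s ≠ r → c s = 0)
    (t r : Fin l) (hrt : r ≤ t) (hti : t ≤ i) :
    ((X : Polynomial (ZMod 4)) ^ (m r : ℕ) - 1) ∣ E t r * (G r).reverse := by
  classical
  set M : ℕ := m r with hMdef
  have hM : M ≠ 0 := NeZero.ne (m r)
  set q : (ZMod 4)[X] := X ^ M - 1 with hq
  set a : Fin M → ZMod 4 := vecOf m r (E t r) with ha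
  set b : Fin M → ZMod 4 := vecOf m r (G r) with hb
  obtain ⟨c, hcmem, hcr, hcs⟩ := hG r (le_trans hrt hti)
  -- iterated shifts stay in the code and shift each block
  open Fin.NatCast in
  have hiter : ∀ k : ℕ, (shiftAll m)^[k] c ∈ Ccode ∧
      ∀ s j, (shiftAll m)^[k] c s j = c s (j - (k : Fin (m s))) := by
    intro k
    induction k with
    | zero => exact ⟨hcmem, by simp⟩
    | succ n ih =>
      constructor
      · rw [Function.iterate_succ_apply']
        exact hC _ ih.1
      · intro s j
        rw [Function.iterate_succ_apply']
        show (shiftAll m ((shiftAll m)^[n] c)) s j = _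
        rw [shiftAll, ih.2 s (j - 1)]
        congr 1
        push_cast
        abel
  -- the cyclic correlations vanish
  have hcorr : ∀ n : Fin M, ∑ j : Fin M, a j * b (j - n) = 0 := by
    intro n
    have h0 := hdual t _ (hiter (n : ℕ)).1
    rw [innerP, Finset.sum_eq_single_of_mem r (Finset.mem_univ r)] at h0
    · rw [← h0]
      refine Finset.sum_congr rfl fun j _ => ?_
      rw [heVec t r, if_pos hrt, (hiter _).2 r j, hcr]
      open Fin.NatCast in have : ((((n : ℕ)) : Fin (m r))) = n := Fin.cast_val_eq_self n
      rw [this]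
    · intro s _ hs
      by_cases hsi : s ≤ i
      · refine Finset.sum_eq_zero fun j _ => ?_
        rw [(hiter _).2 s j, hcs s hsi hs]
        simp
      · refine Finset.sum_eq_zero fun j _ => ?_
        rw [heVec t s, if_neg (fun h => hsi (le_trans h hti))]
        simp
  -- pass to the quotient ring
  rw [← AdjoinRoot.mk_eq_zero, ← AdjoinRoot.aeval_eq, map_mul]
  set S := AdjoinRoot q
  set u : S := AdjoinRoot.root q with hu'
  have hu : u ^ M = 1 := by
    have h : (AdjoinRoot.mk q) q = 0 := AdjoinRoot.mk_self
    rw [hq] at h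
    simpa [sub_eq_zero, map_sub, map_pow] using h
  set v : S := u ^ (M - 1) with hv
  have hvM : v ^ M = 1 := by
    rw [hv, ← pow_mul, mul_comm, pow_mul, hu, one_pow]
  have huv : ∀ j k : Fin M, u ^ (j : ℕ) * v ^ (k : ℕ) = u ^ ((j - k : Fin M) : ℕ) := by
    intro j k
    have h1 : u ^ (j : ℕ) * v ^ (k : ℕ) = u ^ ((j : ℕ) + (k : ℕ) * (M - 1)) := by
      rw [hv, ← pow_mul, ← pow_add, mul_comm (M-1) (k : ℕ)]
    rw [h1, pow_mod_of_pow_eq_one hu, key_exponent hM j k]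
  have φdef : ∀ x : ZMod 4, algebraMap (ZMod 4) S x = algebraMap (ZMod 4) S x := fun _ => rfl
  -- expansion of aeval u (E t r)
  have hE : aeval u (E t r) = ∑ j : Fin M, algebraMap (ZMod 4) S (a j) * u ^ (j : ℕ) := by
    rw [aeval_root_of_pow_eq_one hM hu (E t r),
      ← Fin.sum_univ_eq_sum_range (fun n => algebraMap (ZMod 4) S
        ((E t r %ₘ ((X : (ZMod 4)[X]) ^ M - 1)).coeff n) * u ^ n) M]
    exact Finset.sum_congr rfl fun j _ => rfl
  have hGv : aeval v (G r) = ∑ j : Fin M, algebraMap (ZMod 4) S (b j) * v ^ (j : ℕ) := by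
    rw [aeval_root_of_pow_eq_one hM hvM (G r),
      ← Fin.sum_univ_eq_sum_range (fun n => algebraMap (ZMod 4) S
        ((G r %ₘ ((X : (ZMod 4)[X]) ^ M - 1)).coeff n) * v ^ n) M]
    exact Finset.sum_congr rfl fun j _ => rfl
  -- expansion of aeval u (reverse (G r))
  set d : ℕ := (G r).natDegree with hd
  have hudk : ∀ k, k ≤ d → u ^ d * v ^ k = u ^ (d - k) := by
    intro k hk
    have e : d + (M - 1) * k = (d - k) + M * k := by
      have h5 : (M - 1) * k = M * k - k := by rw [Nat.sub_mul, one_mul]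
      have h6 : k ≤ M * k := Nat.le_mul_of_pos_left k (Nat.pos_of_ne_zero hM)
      rw [h5]
      generalize M * k = P at h6 ⊢
      omega
    rw [hv, ← pow_mul, ← pow_add, e, pow_add, pow_mul, hu, one_pow, mul_one]
  have hrev : aeval u ((G r).reverse) = u ^ d * aeval v (G r) := by
    have hlt : (G r).reverse.natDegree < d + 1 :=
      lt_of_le_of_lt (Polynomial.reverse_natDegree_le (G r)) (Nat.lt_succ_self d)
    rw [Polynomial.aeval_eq_sum_range' hlt u]
    have h1 : ∀ k ∈ Finset.range (d + 1),
        (G r).reverse.coeff k • u ^ k = (G r).coeff (d - k) • u ^ k := by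
      intro k hk
      rw [Polynomial.coeff_reverse, Polynomial.revAt_le
        (Nat.lt_succ_iff.mp (Finset.mem_range.mp hk))]
    rw [Finset.sum_congr rfl h1,
      ← Finset.sum_range_reflect (fun k => (G r).coeff (d - k) • u ^ k) (d + 1)]
    rw [Polynomial.aeval_eq_sum_range (p := G r) v, Finset.mul_sum, hd]
    refine Finset.sum_congr rfl fun k hk => ?_
    have hk' : k ≤ (G r).natDegree := Nat.lt_succ_iff.mp (Finset.mem_range.mp hk)
    have e1 : (G r).natDegree + 1 - 1 - k = (G r).natDegree - k := by omega
    rw [e1, Nat.sub_sub_self hk', Algebra.smul_def, Algebra.smul_def,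
      ← hudk k (by rw [hd]; exact hk')]
    ring
  -- the main cancellation
  have main : (∑ j : Fin M, algebraMap (ZMod 4) S (a j) * u ^ (j : ℕ)) *
      (∑ k : Fin M, algebraMap (ZMod 4) S (b k) * v ^ (k : ℕ)) = 0 := by
    rw [Finset.sum_mul_sum]
    have step : ∀ j : Fin M,
        (∑ k : Fin M, (algebraMap (ZMod 4) S (a j) * u ^ (j : ℕ)) *
          (algebraMap (ZMod 4) S (b k) * v ^ (k : ℕ)))
        = ∑ n : Fin M, algebraMap (ZMod 4) S (a j * b (j - n)) * u ^ ((n : Fin M) : ℕ) := by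
      intro j
      refine Fintype.sum_equiv (Equiv.subLeft j) _ _ fun k => ?_
      show (algebraMap (ZMod 4) S (a j) * u ^ (j : ℕ)) *
          (algebraMap (ZMod 4) S (b k) * v ^ (k : ℕ))
        = algebraMap (ZMod 4) S (a j * b (j - (j - k))) * u ^ ((j - k : Fin M) : ℕ)
      rw [sub_sub_cancel, map_mul, ← huv j k]
      ring
    rw [Finset.sum_congr rfl fun j _ => step j, Finset.sum_comm]
    refine Finset.sum_eq_zero fun n _ => ?_
    rw [← Finset.sum_mul, ← map_sum, hcorr n]
    simp
  rw [hE, hrev, hGv, mul_left_comm, main, mul_zero]
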